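/- Let G = (V,E) be a finite, strongly connected directed graph containing at least one edge, let T ⊆ V be nonempty, let s ∈ T, and assume that the subgraph of G induced on V ∖ {s} contains no closed walk (equivalently, every closed walk of G visits s). Define the length of a closed walk v₀, …, v_ℓ as the number of indices i < ℓ with v_{i+1} ∈ T, and let δ be the minimum length over all closed walks that start and end at s. Then δ < |T| if and only if there exists a closed walk in G whose vertex set does not contain all elements of T. -/

import Mathlib

/-- A closed walk `w 0, w 1, …, w ℓ` of length `ℓ ≥ 1` with `w ℓ = w 0`;
its vertex set is `{w i : i < ℓ}`. -/
def IsClosedWalk {V : Type*} (E : V → V → Prop) (ℓ : ℕ) (w : ℕ → V) : Prop :=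
  1 ≤ ℓ ∧ (∀ i < ℓ, E (w i) (w (i + 1))) ∧ w ℓ = w 0

lemma exists_path_aux {V : Type*} {E : V → V → Prop} {u v : V}
    (h : Relation.ReflTransGen E u v) :
    ∃ (n : ℕ) (f : ℕ → V), f 0 = u ∧ f n = v ∧ ∀ i < n, E (f i) (f (i+1)) := by
  induction h with
  | refl => exact ⟨0, fun _ => u, rfl, rfl, fun i hi => absurd hi (by omega)⟩
  | @tail b c hab hbc ih =>
    obtain ⟨n, f, h0, hn, hstep⟩ := ih
    refine ⟨n+1, fun i => if i ≤ n then f i else c, by simp [h0], by simp, ?_⟩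
    intro i hi
    rcases lt_or_eq_of_le (Nat.lt_succ_iff.mp hi) with h' | h'
    · simp only [if_pos (le_of_lt h'), if_pos (Nat.succ_le_of_lt h')]
      exact hstep i h'
    · subst h'
      simp only [if_pos le_rfl, if_neg (by omega : ¬ (i+1 ≤ i))]
      rw [hn]; exact hbc

lemma exists_closed_walk_at {V : Type*} {E : V → V → Prop} (s : V)
    (hsc : ∀ u v : V, Relation.ReflTransGen E u v)
    (hedge : ∃ a b : V, E a b) :
    ∃ (ℓ : ℕ) (w : ℕ → V), IsClosedWalk E ℓ w ∧ w 0 = s := by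
  obtain ⟨a, b, hab⟩ := hedge
  obtain ⟨n1, f1, hf10, hf1n, hf1s⟩ := exists_path_aux (hsc s a)
  obtain ⟨n2, f2, hf20, hf2n, hf2s⟩ := exists_path_aux (hsc b s)
  refine ⟨n1 + 1 + n2, fun i => if i ≤ n1 then f1 i else f2 (i - (n1+1)),
    ⟨by omega, ?_, ?_⟩, by simp [hf10]⟩
  · intro i hi
    rcases Nat.lt_trichotomy i n1 with h' | h' | h'
    · simp only [if_pos (le_of_lt h'), if_pos (Nat.succ_le_of_lt h')]
      exact hf1s i h'
    · subst h'
      simp only [if_pos le_rfl, if_neg (by omega : ¬ (i+1 ≤ i))]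
      have : i + 1 - (i + 1) = 0 := by omega
      rw [this, hf20, hf1n]; exact hab
    · simp only [if_neg (by omega : ¬ (i ≤ n1)), if_neg (by omega : ¬ (i+1 ≤ n1))]
      have h1 : i + 1 - (n1 + 1) = (i - (n1+1)) + 1 := by omega
      rw [h1]
      exact hf2s _ (by omega)
  · simp only [if_neg (by omega : ¬ (n1 + 1 + n2 ≤ n1)), if_pos (by omega : (0:ℕ) ≤ n1)]
    have : n1 + 1 + n2 - (n1 + 1) = n2 := by omega
    rw [this, hf2n, hf10]

theorem stmt3 {V : Type*} [Fintype V] (E : V → V → Prop) (T : Set V) (s : V)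
    (hsc : ∀ u v : V, Relation.ReflTransGen E u v)
    (hedge : ∃ a b : V, E a b)
    (hT : T.Nonempty) (hs : s ∈ T)
    -- the subgraph induced on `V \ {s}` contains no closed walk:
    (hnos : ¬ ∃ (ℓ : ℕ) (w : ℕ → V),
        IsClosedWalk (fun a b => a ≠ s ∧ b ≠ s ∧ E a b) ℓ w) :
    -- `δ` is the minimum, over closed walks starting and ending at `s`, of the
    -- number of indices `i < ℓ` with `w (i+1) ∈ T` (the 0/1 length of the walk)
    sInf {d : ℕ | ∃ (ℓ : ℕ) (w : ℕ → V), IsClosedWalk E ℓ w ∧ w 0 = s ∧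
        d = {i : ℕ | i < ℓ ∧ w (i + 1) ∈ T}.ncard} < T.ncard ↔
      ∃ (ℓ : ℕ) (w : ℕ → V), IsClosedWalk E ℓ w ∧ ∃ t ∈ T, ∀ i < ℓ, w i ≠ t := by
  classical
  have hTfin : T.Finite := Set.toFinite T
  set D : Set ℕ := {d : ℕ | ∃ (ℓ : ℕ) (w : ℕ → V), IsClosedWalk E ℓ w ∧ w 0 = s ∧
      d = {i : ℕ | i < ℓ ∧ w (i + 1) ∈ T}.ncard} with hD
  have hDne : D.Nonempty := by
    obtain ⟨ℓ, w, hw, h0⟩ := exists_closed_walk_at s hsc hedge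
    exact ⟨_, ℓ, w, hw, h0, rfl⟩
  constructor
  · intro hlt
    obtain ⟨ℓ, w, hw, h0, hd⟩ := Nat.sInf_mem hDne
    refine ⟨ℓ, w, hw, ?_⟩
    by_contra hcon
    push_neg at hcon
    have hSfin : {i : ℕ | i < ℓ ∧ w (i + 1) ∈ T}.Finite :=
      (Set.finite_Iio ℓ).subset (fun x hx => hx.1)
    have hsub : T ⊆ (fun i => w (i+1)) '' {i : ℕ | i < ℓ ∧ w (i + 1) ∈ T} := by
      intro t ht
      obtain ⟨i, hi, hit⟩ := hcon t ht
      rcases Nat.eq_zero_or_pos i with h0' | h0'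
      · subst h0'
        have h1 : ℓ - 1 + 1 = ℓ := by omega
        have h2 : w (ℓ - 1 + 1) = t := by rw [h1, hw.2.2, hit]
        exact ⟨ℓ - 1, ⟨by omega, h2 ▸ ht⟩, h2⟩
      · have h1 : i - 1 + 1 = i := by omega
        have h2 : w (i - 1 + 1) = t := by rw [h1, hit]
        exact ⟨i - 1, ⟨by omega, h2 ▸ ht⟩, h2⟩
    have hle : T.ncard ≤ sInf D := by
      calc T.ncard ≤ ((fun i => w (i+1)) '' {i : ℕ | i < ℓ ∧ w (i + 1) ∈ T}).ncard :=
            Set.ncard_le_ncard hsub (hSfin.image _)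
        _ ≤ {i : ℕ | i < ℓ ∧ w (i + 1) ∈ T}.ncard := Set.ncard_image_le hSfin
        _ = sInf D := hd.symm
    omega
  · rintro ⟨ℓ, w, ⟨h1, h2, h3⟩, t, ht, hmiss⟩
    -- the walk must visit s
    have hvisit : ∃ k < ℓ, w k = s := by
      by_contra h
      push_neg at h
      refine hnos ⟨ℓ, w, h1, fun i hi => ⟨h i hi, ?_, h2 i hi⟩, h3⟩
      rcases Nat.lt_or_ge (i+1) ℓ with h' | h'
      · exact h _ h'
      · have he : i + 1 = ℓ := by omega
        rw [he, h3]; exact h 0 h1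
    obtain ⟨k, hk, hks⟩ := hvisit
    -- rotate the walk to start at s
    set w' : ℕ → V := fun i => if k + i < ℓ then w (k + i) else w (k + i - ℓ) with hw'
    have hw'0 : w' 0 = s := by simp [hw', hk, hks]
    have hw'val : ∀ i ≤ ℓ, ∃ j < ℓ, w' i = w j := by
      intro i hi
      by_cases hc : k + i < ℓ
      · exact ⟨k + i, hc, by simp [hw', hc]⟩
      · exact ⟨k + i - ℓ, by omega, by simp [hw', hc]⟩
    have hw'edge : ∀ i < ℓ, E (w' i) (w' (i+1)) := by
      intro i hi
      by_cases hc : k + i < ℓ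
      · by_cases hc2 : k + (i+1) < ℓ
        · have e1 : w' i = w (k + i) := by simp [hw', hc]
          have e2 : w' (i+1) = w (k + i + 1) := by
            simp only [hw']
            rw [if_pos hc2, show k + (i+1) = k + i + 1 by omega]
          rw [e1, e2]
          exact h2 (k+i) hc
        · have e1 : w' (i+1) = w 0 := by
            simp only [hw']
            rw [if_neg (by omega), show k + (i+1) - ℓ = 0 by omega]
          have e2 : w' i = w (k + i) := by simp [hw', hc]
          rw [e1, e2, ← h3, show ℓ = k + i + 1 by omega]
          exact h2 (k+i) hc
      · have hlt : k + i - ℓ < ℓ := by omega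
        have e1 : w' i = w (k + i - ℓ) := by simp [hw', hc]
        have e2 : w' (i+1) = w (k + i - ℓ + 1) := by
          simp only [hw']
          rw [if_neg (by omega), show k + (i+1) - ℓ = k + i - ℓ + 1 by omega]
        rw [e1, e2]
        exact h2 _ hlt
    have hw'ℓ : w' ℓ = s := by
      have : w' ℓ = w k := by
        simp only [hw']
        rw [if_neg (by omega), show k + ℓ - ℓ = k by omega]
      rw [this, hks]
    -- first return to s
    have hP : ∃ j, 0 < j ∧ j ≤ ℓ ∧ w' j = s := ⟨ℓ, h1, le_rfl, hw'ℓ⟩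
    set m := Nat.find hP with hm
    obtain ⟨hm0, hmℓ, hms⟩ := Nat.find_spec hP
    rw [← hm] at hm0 hmℓ hms
    have hmin : ∀ j, 0 < j → j < m → w' j ≠ s := by
      intro j hj0 hjm hjs
      exact Nat.find_min hP hjm ⟨hj0, by omega, hjs⟩
    have hwalk : IsClosedWalk E m w' :=
      ⟨hm0, fun i hi => hw'edge i (by omega), by rw [hms, hw'0]⟩
    have hmemD : {i : ℕ | i < m ∧ w' (i + 1) ∈ T}.ncard ∈ D :=
      ⟨m, w', hwalk, hw'0, rfl⟩
    have hinf_le : sInf D ≤ {i : ℕ | i < m ∧ w' (i + 1) ∈ T}.ncard := Nat.sInf_le hmemD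
    -- the segment is simple: i ↦ w' (i+1) is injective on {i | i < m}
    have haux : ∀ i j, i < j → j < m → w' (i+1) ≠ w' (j+1) := by
      intro i j hij hjm heq
      have hi1 : w' (i+1) ≠ s := hmin (i+1) (by omega) (by omega)
      have hj1 : j + 1 < m := by
        rcases Nat.lt_or_ge (j+1) m with h' | h'
        · exact h'
        · have : j + 1 = m := by omega
          rw [← this] at hms
          exact (hi1 (heq.trans hms)).elim
      have hallne : ∀ q, i + 1 ≤ q → q ≤ j + 1 → w' q ≠ s := by
        intro q hq1 hq2
        exact hmin q (by omega) (by omega)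
      refine hnos ⟨j - i, fun x => w' (i + 1 + x), by omega, ?_, ?_⟩
      · intro x hx
        refine ⟨hallne _ (by omega) (by omega), ?_, ?_⟩
        · show w' (i + 1 + (x + 1)) ≠ s
          rw [show i + 1 + (x + 1) = (i + 1 + x) + 1 by omega]
          exact hallne _ (by omega) (by omega)
        · show E (w' (i + 1 + x)) (w' (i + 1 + (x + 1)))
          rw [show i + 1 + (x + 1) = (i + 1 + x) + 1 by omega]
          exact hw'edge _ (by omega)
      · show w' (i + 1 + (j - i)) = w' (i + 1 + 0)
        rw [show i + 1 + (j - i) = j + 1 by omega, show i + 1 + 0 = i + 1 by omega]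
        exact heq.symm
    have hinj : Set.InjOn (fun i => w' (i+1)) {i : ℕ | i < m ∧ w' (i + 1) ∈ T} := by
      intro i hi j hj heq
      rcases Nat.lt_trichotomy i j with h' | h' | h'
      · exact absurd heq (haux i j h' hj.1)
      · exact h'
      · exact absurd heq.symm (haux j i h' hi.1)
    have hSfin : {i : ℕ | i < m ∧ w' (i + 1) ∈ T}.Finite :=
      (Set.finite_Iio m).subset (fun x hx => hx.1)
    have himg : (fun i => w' (i+1)) '' {i : ℕ | i < m ∧ w' (i + 1) ∈ T} ⊆ T \ {t} := by
      rintro _ ⟨i, ⟨him, hiT⟩, rfl⟩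
      refine ⟨hiT, ?_⟩
      obtain ⟨j, hj, hje⟩ := hw'val (i+1) (by omega)
      simp only [Set.mem_singleton_iff]
      rw [hje]
      exact hmiss j hj
    have hcount : {i : ℕ | i < m ∧ w' (i + 1) ∈ T}.ncard < T.ncard := by
      calc {i : ℕ | i < m ∧ w' (i + 1) ∈ T}.ncard
          = ((fun i => w' (i+1)) '' {i : ℕ | i < m ∧ w' (i + 1) ∈ T}).ncard :=
            (Set.ncard_image_of_injOn hinj).symm
        _ ≤ (T \ {t}).ncard := Set.ncard_le_ncard himg hTfin.diff
        _ < T.ncard := Set.ncard_diff_singleton_lt_of_mem ht hTfin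
    omega
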